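/- Let Q₁ be an A-symmetric idempotent and δ₁, δ₂ the restrictions of X ↦ XQ₁ − Q₁X to A-anti-symmetric and A-symmetric operators respectively. Then δ₁δ₂δ₁ = δ₁ and δ₂δ₁δ₂ = δ₂; consequently δ₂δ₁ and δ₁δ₂ are idempotent linear maps, ker(δ₂δ₁) = ker(δ₁), and range(δ₁δ₂) = range(δ₁). -/
import Mathlib


open ContinuousLinearMap
open scoped InnerProductSpace

/-- For an `A`-symmetric idempotent `Q₁` and `δ(X) = X Q₁ - Q₁ X`: `δ` maps `A`-anti-symmetric
operators to `A`-symmetric ones and vice versa; `δ³ = δ` (so the restrictions `δ₁, δ₂` satisfy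
`δ₁δ₂δ₁ = δ₁`, `δ₂δ₁δ₂ = δ₂`); `ker (δ₂δ₁) = ker δ₁`; and `range (δ₁δ₂) = range δ₁`. -/
theorem delta_restrictions_pseudo_inverse
    {H : Type*} [NormedAddCommGroup H] [InnerProductSpace ℂ H] [CompleteSpace H]
    (A : H →L[ℂ] H) (hA : A.IsPositive) (hAinj : Function.Injective A)
    (Q₁ : H →L[ℂ] H) (hQ₁ : Q₁ ∘L Q₁ = Q₁) (hQ₁A : (adjoint Q₁) ∘L A = A ∘L Q₁)
    (δ : (H →L[ℂ] H) → (H →L[ℂ] H)) (hδ : ∀ X, δ X = X ∘L Q₁ - Q₁ ∘L X) :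
    (∀ X : H →L[ℂ] H, (adjoint X) ∘L A = -(A ∘L X) → (adjoint (δ X)) ∘L A = A ∘L (δ X)) ∧
    (∀ X : H →L[ℂ] H, (adjoint X) ∘L A = A ∘L X → (adjoint (δ X)) ∘L A = -(A ∘L (δ X))) ∧
    (∀ X : H →L[ℂ] H, δ (δ (δ X)) = δ X) ∧
    (∀ X : H →L[ℂ] H, (adjoint X) ∘L A = -(A ∘L X) → (δ (δ X) = 0 ↔ δ X = 0)) ∧
    ({Y : H →L[ℂ] H | ∃ X, (adjoint X) ∘L A = A ∘L X ∧ δ (δ X) = Y} =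
      {Y : H →L[ℂ] H | ∃ X, (adjoint X) ∘L A = -(A ∘L X) ∧ δ X = Y}) := by
  have hδm : ∀ X, δ X = X * Q₁ - Q₁ * X := hδ
  have hQm : Q₁ * Q₁ = Q₁ := hQ₁
  have hQAm : adjoint Q₁ * A = A * Q₁ := hQ₁A
  have hδ3 : ∀ X : H →L[ℂ] H, δ (δ (δ X)) = δ X := by
    intro X
    simp only [hδm, mul_sub, sub_mul, mul_assoc]
    rw [hQm]
    simp only [← mul_assoc, hQm]
    abel
  have hδ0 : δ 0 = 0 := by rw [hδm]; simp
  have hanti : ∀ X : H →L[ℂ] H, (adjoint X) ∘L A = -(A ∘L X) →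
      (adjoint (δ X)) ∘L A = A ∘L (δ X) := by
    intro X hX
    have hXm : adjoint X * A = -(A * X) := hX
    show adjoint (δ X) * A = A * δ X
    rw [hδm, map_sub, sub_mul]
    rw [show adjoint (X * Q₁) = adjoint Q₁ * adjoint X from adjoint_comp ..,
        show adjoint (Q₁ * X) = adjoint X * adjoint Q₁ from adjoint_comp ..]
    rw [mul_assoc, mul_assoc, hXm, hQAm, mul_neg, ← mul_assoc, ← mul_assoc, hQAm, hXm]
    simp only [mul_sub, neg_mul, mul_assoc]
    abel
  have hsym : ∀ X : H →L[ℂ] H, (adjoint X) ∘L A = A ∘L X →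
      (adjoint (δ X)) ∘L A = -(A ∘L (δ X)) := by
    intro X hX
    have hXm : adjoint X * A = A * X := hX
    show adjoint (δ X) * A = -(A * δ X)
    rw [hδm, map_sub, sub_mul]
    rw [show adjoint (X * Q₁) = adjoint Q₁ * adjoint X from adjoint_comp ..,
        show adjoint (Q₁ * X) = adjoint X * adjoint Q₁ from adjoint_comp ..]
    rw [mul_assoc, mul_assoc, hXm, hQAm, ← mul_assoc, ← mul_assoc, hQAm, hXm]
    simp only [mul_sub, neg_sub, mul_assoc]
  refine ⟨hanti, hsym, hδ3, ?_, ?_⟩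
  · intro X _
    constructor
    · intro h
      have := hδ3 X
      rw [h, hδ0] at this
      exact this.symm
    · intro h; rw [h, hδ0]
  · ext Y
    simp only [Set.mem_setOf_eq]
    constructor
    · rintro ⟨X, hX, rfl⟩
      exact ⟨δ X, hsym X hX, rfl⟩
    · rintro ⟨X, hX, rfl⟩
      exact ⟨δ X, hanti X hX, hδ3 X⟩
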